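/- arXiv:1404.3745 — 3 statements merged into one kernel-verified Lean document; each statement's English description precedes it below -/
import Mathlib

section
/- The equation log 2 = ψ(1 - 2p) + 2ψ(p), where ψ(x) = -x log x, has a unique solution p in the open interval (0, 1/2). -/
noncomputable def ψ (x : ℝ) : ℝ := -x * Real.log x

open Real in
lemma psi_eq : ψ = Real.negMulLog := rfl

open Real in
lemma g_half : 2 * Real.negMulLog (1/2) = Real.log 2 := by
  norm_num [Real.negMulLog, Real.log_div, Real.log_inv]
  ring

open Real in
lemma f_third : Real.negMulLog (1 - 2*(1/3:ℝ)) + 2 * Real.negMulLog (1/3) = Real.log 3 := by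
  norm_num [Real.negMulLog, Real.log_div, Real.log_inv]
  ring

open Real in
lemma key_lt {p q : ℝ} (hp0 : 0 < p) (hpq : p < q) (hq : q < 1/2)
    (hfp : negMulLog (1 - 2*p) + 2 * negMulLog p = Real.log 2) :
    Real.log 2 < negMulLog (1 - 2*q) + 2 * negMulLog q := by
  have hden : (0:ℝ) < 1/2 - p := by linarith
  set a : ℝ := (1/2 - q)/(1/2 - p) with ha_def
  set b : ℝ := (q - p)/(1/2 - p) with hb_def
  have ha : 0 < a := div_pos (by linarith) hden
  have hb : 0 < b := div_pos (by linarith) hden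
  have hab : a + b = 1 := by rw [ha_def, hb_def, ← add_div, div_eq_one_iff_eq hden.ne']; ring
  have h1 : a • negMulLog (1-2*p) + b • negMulLog 0 < negMulLog (a • (1-2*p) + b • (0:ℝ)) :=
    strictConcaveOn_negMulLog.2 (by simp; linarith) (by simp)
      (by intro h; rw [sub_eq_zero] at h; linarith) ha hb hab
  have h2 : a • negMulLog p + b • negMulLog (1/2) < negMulLog (a • p + b • (1/2:ℝ)) :=
    strictConcaveOn_negMulLog.2 (by simp [le_of_lt hp0]) (by norm_num)
      (by intro h; linarith) ha hb hab
  have e1 : a • (1-2*p) + b • (0:ℝ) = 1 - 2*q := by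
    simp only [smul_eq_mul, ha_def, hb_def]
    rw [div_mul_eq_mul_div, div_mul_eq_mul_div, ← add_div, div_eq_iff hden.ne']
    ring
  have e2 : a • p + b • (1/2:ℝ) = q := by
    simp only [smul_eq_mul, ha_def, hb_def]
    rw [div_mul_eq_mul_div, div_mul_eq_mul_div, ← add_div, div_eq_iff hden.ne']
    ring
  rw [e1] at h1
  rw [e2] at h2
  simp only [smul_eq_mul, negMulLog_zero, mul_zero, add_zero] at h1 h2
  have c1 : a * negMulLog (1-2*p) + 2*(a * negMulLog p) = a * Real.log 2 := by
    rw [show a * negMulLog (1-2*p) + 2*(a * negMulLog p)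
        = a * (negMulLog (1-2*p) + 2 * negMulLog p) by ring, hfp]
  have c2 : 2*(b * negMulLog (1/2)) = b * Real.log 2 := by
    rw [show 2*(b * negMulLog (1/2)) = b * (2 * negMulLog (1/2)) by ring, g_half]
  have hsum : a * Real.log 2 + b * Real.log 2 = Real.log 2 := by
    rw [← add_mul, hab, one_mul]
  linarith

theorem unique_solution_log2 :
    ∃! p : ℝ, p ∈ Set.Ioo (0 : ℝ) (1/2) ∧ Real.log 2 = ψ (1 - 2*p) + 2 * ψ p := by
  rw [psi_eq]
  have hcont : ContinuousOn (fun p : ℝ => Real.negMulLog (1 - 2*p) + 2 * Real.negMulLog p)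
      (Set.Icc (0:ℝ) (1/3)) := by
    apply Continuous.continuousOn; fun_prop
  have hmem : Real.log 2 ∈ Set.Ioo
      ((fun p : ℝ => Real.negMulLog (1 - 2*p) + 2 * Real.negMulLog p) 0)
      ((fun p : ℝ => Real.negMulLog (1 - 2*p) + 2 * Real.negMulLog p) (1/3)) := by
    simp only [f_third]
    norm_num
    constructor
    · exact Real.log_pos (by norm_num)
    · exact Real.log_lt_log (by norm_num) (by norm_num)
  obtain ⟨p, hp, hfp⟩ := intermediate_value_Ioo (by norm_num : (0:ℝ) ≤ 1/3) hcont hmem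
  have hfp' : Real.negMulLog (1 - 2*p) + 2 * Real.negMulLog p = Real.log 2 := hfp
  refine ⟨p, ⟨⟨hp.1, by have := hp.2; linarith⟩, hfp'.symm⟩, ?_⟩
  rintro q ⟨⟨hq0, hq2⟩, hfq⟩
  by_contra hne
  rcases lt_or_gt_of_ne (Ne.symm hne) with h | h
  · exact absurd hfq.symm (ne_of_gt (key_lt hp.1 h hq2 hfp'))
  · have := key_lt hq0 h (by have := hp.2; linarith) hfq.symm
    linarith
end

section
/- There exist a finite set G ⊂ ℝ² on which π_{-1}(a,b) = a-b is injective and a probability measure P on G such that H(P) / max(H(π₀P), H(π₁P), H(π_∞P)) > log(27)/log(27/4). -/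
open Finset
open scoped Classical

noncomputable def pushEnt (G : Finset (ℝ × ℝ)) (P : ℝ × ℝ → ℝ) (π : ℝ × ℝ → ℝ) : ℝ :=
  -∑ ν ∈ G.image π, (∑ g ∈ G.filter (fun g => π g = ν), P g) *
      Real.log (∑ g ∈ G.filter (fun g => π g = ν), P g)

noncomputable def ent (G : Finset (ℝ × ℝ)) (P : ℝ × ℝ → ℝ) : ℝ :=
  -∑ g ∈ G, P g * Real.log (P g)

def π₀ : ℝ × ℝ → ℝ := fun x => x.1
def π₁ : ℝ × ℝ → ℝ := fun x => x.1 + x.2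
def π₂ : ℝ × ℝ → ℝ := fun x => x.1 + 2 * x.2
def πinf : ℝ × ℝ → ℝ := fun x => x.2

noncomputable def Gw : Finset (ℝ × ℝ) := {((0:ℝ),(1:ℝ)), (1,0), (1,1), (2,0)}

noncomputable def Pw : ℝ × ℝ → ℝ := fun x =>
  if x = (0,1) then 1/9 else if x = (1,0) then 7/18 else if x = (1,1) then 7/18
  else if x = (2,0) then 1/9 else 0

lemma log3_bounds : 1.0985 < Real.log 3 ∧ Real.log 3 < 1.0987 := by
  have key : 12 * Real.log 3 = 19 * Real.log 2 + Real.log (531441/524288) := by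
    have h : Real.log ((3:ℝ)^12) = Real.log ((2:ℝ)^19 * (531441/524288)) := by norm_num
    rw [Real.log_pow, Real.log_mul (by positivity) (by norm_num), Real.log_pow] at h
    push_cast at h; linarith
  have hub : Real.log (531441/524288 : ℝ) ≤ 531441/524288 - 1 :=
    Real.log_le_sub_one_of_pos (by norm_num)
  have hlb : 1 - 524288/531441 ≤ Real.log (531441/524288 : ℝ) := by
    have h := Real.log_le_sub_one_of_pos (x := (524288/531441 : ℝ)) (by norm_num)
    rw [show (524288/531441:ℝ) = (531441/524288:ℝ)⁻¹ by norm_num, Real.log_inv] at h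
    linarith
  constructor <;> nlinarith [Real.log_two_gt_d9, Real.log_two_lt_d9]

lemma log7_bounds : 1.9458 < Real.log 7 ∧ Real.log 7 < 1.9460 := by
  have key : 5 * Real.log 7 = 14 * Real.log 2 + Real.log (16807/16384) := by
    have h : Real.log ((7:ℝ)^5) = Real.log ((2:ℝ)^14 * (16807/16384)) := by norm_num
    rw [Real.log_pow, Real.log_mul (by positivity) (by norm_num), Real.log_pow] at h
    push_cast at h; linarith
  have hub : Real.log (16807/16384 : ℝ) ≤ 16807/16384 - 1 :=
    Real.log_le_sub_one_of_pos (by norm_num)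
  have hlb : 1 - 16384/16807 ≤ Real.log (16807/16384 : ℝ) := by
    have h := Real.log_le_sub_one_of_pos (x := (16384/16807 : ℝ)) (by norm_num)
    rw [show (16384/16807:ℝ) = (16807/16384:ℝ)⁻¹ by norm_num, Real.log_inv] at h
    linarith
  constructor <;> nlinarith [Real.log_two_gt_d9, Real.log_two_lt_d9]

lemma ent_Gw : ent Gw Pw = 2 * Real.log 3 + 7/9 * Real.log 2 - 7/9 * Real.log 7 := by
  have e1 : Real.log (1/9 : ℝ) = -(2 * Real.log 3) := by
    rw [show (1/9:ℝ) = ((3:ℝ)^2)⁻¹ by norm_num, Real.log_inv, Real.log_pow]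
    push_cast; ring
  have e2 : Real.log (7/18 : ℝ) = Real.log 7 - Real.log 2 - 2 * Real.log 3 := by
    rw [Real.log_div (by norm_num) (by norm_num),
      show (18:ℝ) = 2 * 3^2 by norm_num,
      Real.log_mul (by norm_num) (by positivity), Real.log_pow]
    push_cast; ring
  simp [ent, Gw, Pw, Finset.sum_insert, Prod.ext_iff]
  rw [show Real.log (9:ℝ) = 2 * Real.log 3 by
    rw [show (9:ℝ) = 3^2 by norm_num, Real.log_pow]; push_cast; ring, e2]
  ring

lemma push0_Gw : pushEnt Gw Pw π₀ = 2 * Real.log 3 - 7/9 * Real.log 7 := by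
  have himg : Gw.image π₀ = {(0:ℝ), 1, 2} := by
    simp [Gw, π₀, Finset.image_insert]
  rw [pushEnt, himg]
  rw [show ({(0:ℝ),1,2} : Finset ℝ) = insert 0 (insert 1 {2}) from rfl]
  rw [Finset.sum_insert (by norm_num), Finset.sum_insert (by norm_num), Finset.sum_singleton]
  have h0 : Gw.filter (fun g => π₀ g = 0) = {((0:ℝ),(1:ℝ))} := by
    simp [Gw, π₀, Finset.filter_insert, Finset.filter_singleton, Prod.ext_iff]
    ext ⟨a, b⟩; simp; grind
  have h1 : Gw.filter (fun g => π₀ g = 1) = {((1:ℝ),(0:ℝ)), (1,1)} := by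
    simp [Gw, π₀, Finset.filter_insert, Finset.filter_singleton, Prod.ext_iff]
    ext ⟨a, b⟩; simp; grind
  have h2 : Gw.filter (fun g => π₀ g = 2) = {((2:ℝ),(0:ℝ))} := by
    simp [Gw, π₀, Finset.filter_insert, Finset.filter_singleton, Prod.ext_iff]
    ext ⟨a, b⟩; simp; grind
  rw [h0, h1, h2]
  have hs : Pw (1,0) + Pw (1,1) = 7/9 := by norm_num [Pw, Prod.ext_iff]
  have e1 : Real.log (1/9 : ℝ) = -(2 * Real.log 3) := by
    rw [show (1/9:ℝ) = ((3:ℝ)^2)⁻¹ by norm_num, Real.log_inv, Real.log_pow]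
    push_cast; ring
  have e3 : Real.log (7/9 : ℝ) = Real.log 7 - 2 * Real.log 3 := by
    rw [Real.log_div (by norm_num) (by norm_num),
      show (9:ℝ) = 3^2 by norm_num, Real.log_pow]
    push_cast; ring
  simp [Pw, Finset.sum_insert, Prod.ext_iff]
  rw [show Real.log (9:ℝ) = 2 * Real.log 3 by
    rw [show (9:ℝ) = 3^2 by norm_num, Real.log_pow]; push_cast; ring,
    show (7/18 + 7/18 : ℝ) = 7/9 by norm_num, e3]
  ring

lemma push1_Gw : pushEnt Gw Pw π₁ = Real.log 2 := by
  have himg : Gw.image π₁ = {(1:ℝ), 2} := by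
    norm_num [Gw, π₁, Finset.image_insert]
  rw [pushEnt, himg]
  rw [show ({(1:ℝ),2} : Finset ℝ) = insert 1 {2} from rfl]
  rw [Finset.sum_insert (by norm_num), Finset.sum_singleton]
  have h1 : Gw.filter (fun g => π₁ g = 1) = {((0:ℝ),(1:ℝ)), (1,0)} := by
    norm_num [Gw, π₁, Finset.filter_insert, Finset.filter_singleton, Prod.ext_iff]
    ext ⟨a, b⟩; simp; grind
  have h2 : Gw.filter (fun g => π₁ g = 2) = {((1:ℝ),(1:ℝ)), (2,0)} := by
    ext ⟨a, b⟩
    rw [Finset.mem_filter]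
    simp only [Gw, π₁, Finset.mem_insert, Finset.mem_singleton, Prod.mk.injEq]
    constructor
    · rintro ⟨(⟨rfl, rfl⟩ | ⟨rfl, rfl⟩ | ⟨rfl, rfl⟩ | ⟨rfl, rfl⟩), h⟩ <;> revert h <;> norm_num
    · rintro (⟨rfl, rfl⟩ | ⟨rfl, rfl⟩) <;> norm_num
  rw [h1, h2]
  have e : Real.log (1/2 : ℝ) = -Real.log 2 := by
    rw [show (1/2:ℝ) = (2:ℝ)⁻¹ by norm_num, Real.log_inv]
  simp [Pw, Finset.sum_insert, Prod.ext_iff]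
  rw [show (7/18 + 9⁻¹ : ℝ) = 1/2 by norm_num, show (9⁻¹ + 7/18 : ℝ) = 1/2 by norm_num, e]
  ring

lemma pushinf_Gw : pushEnt Gw Pw πinf = Real.log 2 := by
  have himg : Gw.image πinf = {(1:ℝ), 0} := by
    simp [Gw, πinf, Finset.image_insert]
  rw [pushEnt, himg]
  rw [show ({(1:ℝ),0} : Finset ℝ) = insert 1 {0} from rfl]
  rw [Finset.sum_insert (by norm_num), Finset.sum_singleton]
  have h1 : Gw.filter (fun g => πinf g = 1) = {((0:ℝ),(1:ℝ)), (1,1)} := by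
    simp [Gw, πinf, Finset.filter_insert, Finset.filter_singleton, Prod.ext_iff]
    ext ⟨a, b⟩; simp; grind
  have h0 : Gw.filter (fun g => πinf g = 0) = {((1:ℝ),(0:ℝ)), (2,0)} := by
    simp [Gw, πinf, Finset.filter_insert, Finset.filter_singleton, Prod.ext_iff]
    ext ⟨a, b⟩; simp; grind
  rw [h1, h0]
  have e : Real.log (1/2 : ℝ) = -Real.log 2 := by
    rw [show (1/2:ℝ) = (2:ℝ)⁻¹ by norm_num, Real.log_inv]
  simp [Pw, Finset.sum_insert, Prod.ext_iff]
  rw [show (7/18 + 9⁻¹ : ℝ) = 1/2 by norm_num, show (9⁻¹ + 7/18 : ℝ) = 1/2 by norm_num, e]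
  ring

theorem counterexample_beats_ruzsa :
    ∃ (G : Finset (ℝ × ℝ)) (P : ℝ × ℝ → ℝ),
      Set.InjOn (fun x : ℝ × ℝ => x.1 - x.2) (G : Set (ℝ × ℝ)) ∧
      (∀ g ∈ G, 0 ≤ P g) ∧ (∑ g ∈ G, P g = 1) ∧
      ent G P / max (max (pushEnt G P π₀) (pushEnt G P π₁)) (pushEnt G P πinf)
        > Real.log 27 / Real.log (27/4) := by
  refine ⟨Gw, Pw, ?_, ?_, ?_, ?_⟩
  · intro x hx y hy h
    simp only [Gw, Finset.coe_insert, Finset.coe_singleton, Set.mem_insert_iff,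
      Set.mem_singleton_iff] at hx hy
    rcases hx with rfl | rfl | rfl | rfl <;> rcases hy with rfl | rfl | rfl | rfl <;>
      first | rfl | (exfalso; norm_num at h)
  · intro g _
    simp only [Pw]
    split_ifs <;> norm_num
  · simp [Gw, Pw, Finset.sum_insert, Prod.ext_iff]; norm_num
  · rw [ent_Gw, push0_Gw, push1_Gw, pushinf_Gw]
    obtain ⟨l3lb, l3ub⟩ := log3_bounds
    obtain ⟨l7lb, l7ub⟩ := log7_bounds
    have l2lb := Real.log_two_gt_d9
    have l2ub := Real.log_two_lt_d9
    have e27 : Real.log 27 = 3 * Real.log 3 := by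
      rw [show (27:ℝ) = 3^3 by norm_num, Real.log_pow]; push_cast; ring
    have e274 : Real.log (27/4 : ℝ) = 3 * Real.log 3 - 2 * Real.log 2 := by
      rw [Real.log_div (by norm_num) (by norm_num), show (27:ℝ) = 3^3 by norm_num,
        show (4:ℝ) = 2^2 by norm_num, Real.log_pow, Real.log_pow]
      push_cast; ring
    have hmax : max (max (2 * Real.log 3 - 7/9 * Real.log 7) (Real.log 2)) (Real.log 2)
        = Real.log 2 := by
      rw [max_eq_right (show 2 * Real.log 3 - 7/9 * Real.log 7 ≤ Real.log 2 by nlinarith),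
        max_self]
    rw [hmax, e27, e274, gt_iff_lt, div_lt_div_iff₀ (by nlinarith) (by nlinarith)]
    nlinarith
end

section
/- Let G = {(0,1), (1,0), (1,1), (2,0), (1,1/2)} and let P assign probability p to each of the first four points and 1-4p to the last point, where 0 < p < 1/4. Then H(π₁P) = H(π_∞P) and H(π₀P) = H(π₂P). -/
open Finset
open scoped Classical

theorem five_point_symmetries (p : ℝ) (hp : p ∈ Set.Ioo (0 : ℝ) (1/4))
    (P : ℝ × ℝ → ℝ) (hP1 : P (0,1) = p) (hP2 : P (1,0) = p)
    (hP3 : P (1,1) = p) (hP4 : P (2,0) = p) (hP5 : P (1, 1/2) = 1 - 4*p) :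
    let G : Finset (ℝ × ℝ) := {(0,1), (1,0), (1,1), (2,0), (1, 1/2)}
    pushEnt G P π₁ = pushEnt G P πinf ∧ pushEnt G P π₀ = pushEnt G P π₂ := by
  intro G
  have hP3' : P 1 = p := hP3
  constructor <;>
  · simp only [pushEnt, π₀, π₁, π₂, πinf, G, Finset.image_insert, Finset.image_singleton,
      Finset.filter_insert, Finset.filter_singleton]
    norm_num [Prod.ext_iff, Finset.sum_filter, Finset.sum_insert, Finset.mem_insert, hP1, hP2, hP3, hP4, hP5, hP3']
end
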